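/- Let P be super essential and fix j ∈ {1,…,n-1} and I with S_j(f_I) ≠ ∅. Then there exists I' ≠ I with S_j(f_{I'}) ≠ ∅ such that o_{I,j} − γ_j ≤ J_{I'} − γ. -/

import Mathlib

open Finset

/-- Laurent differential polynomials in the differential indeterminates
`u_1, …, u_p` over a coefficient ring `D`, modelled as finitely supported
families of coefficients indexed by Laurent exponent vectors on the
variables `u_{j,k}` (`u_{j,k}` = the `k`-th derivative of `u_j`). -/
abbrev LaurentDiffPoly (D : Type*) [CommRing D] (p : ℕ) : Type _ :=
  ((Fin p × ℕ) →₀ ℤ) →₀ D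

/-- differential support of `f` in `u_j`: the orders `k` of the derivatives
`u_{j,k}` effectively appearing in `f`. -/
noncomputable def SjF {D : Type*} [CommRing D] {p : ℕ} (j : Fin p)
    (f : LaurentDiffPoly D p) : Finset ℕ :=
  f.support.biUnion (fun e => (e.support.filter (fun v => v.1 = j)).image Prod.snd)

/-- the formal total derivative: `d` on coefficients, `u_{j,k} ↦ u_{j,k+1}`. -/
noncomputable def laurentDeriv {D : Type*} [CommRing D] {p : ℕ} (d : D → D)
    (f : LaurentDiffPoly D p) : LaurentDiffPoly D p :=
  f.sum (fun e a =>
    Finsupp.single e (d a)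
      + e.sum (fun v n =>
          Finsupp.single (e - Finsupp.single v 1 + Finsupp.single (v.1, v.2 + 1) 1) (n • a)))

/-- `ord(f, u_j) ∈ ℕ ∪ {-∞}`. -/
noncomputable def ordJ {D : Type*} [CommRing D] {p : ℕ} (j : Fin p)
    (f : LaurentDiffPoly D p) : WithBot ℕ := (SjF j f).max

/-- the Jacobi number `J_i` of the order matrix of the system with the `i`-th
row removed: the max over its diagonals (bijections onto the columns). -/
noncomputable def jacobiNumber {D : Type*} [CommRing D] {p : ℕ}
    (f : Fin (p+1) → LaurentDiffPoly D p) (i : Fin (p+1)) : WithBot ℕ :=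
  Finset.univ.sup (fun σ : Equiv.Perm (Fin p) => ∑ k, ordJ (σ k) (f (i.succAbove k)))


/-- Lemma lem-I_Ip (1): if `P` is super essential, `j` a variable
index and `I` an index with `S_j(f_I) ≠ ∅`, then there exists `I' ≠ I` with
`S_j(f_{I'}) ≠ ∅` and `o_{I,j} − γ_j ≤ J_{I'} − γ`. -/
theorem exists_index_order_le_jacobi
    {D : Type*} [CommRing D] [IsDomain D] [CharZero D] {p : ℕ}
    (f : Fin (p+1) → LaurentDiffPoly D p)
    (hP1 : ∀ i, ∃ j, (SjF j (f i)).Nonempty)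
    (hP2 : Function.Injective f)
    (hP3 : ∀ j : Fin p, (Finset.univ.biUnion fun i => SjF j (f i)).Nonempty)
    (hsuper : ∀ i, (0 : WithBot ℕ) ≤ jacobiNumber f i)
    (Jn : Fin (p+1) → ℕ) (hJn : ∀ i, (Jn i : WithBot ℕ) = jacobiNumber f i)
    (γ : Fin p → ℕ)
    (hγ : ∀ j, γ j = (Finset.univ.biUnion fun i => SjF j (f i)).min' (hP3 j))
    (γs : ℕ) (hγs : γs = ∑ j, γ j)
    (j : Fin p) (I : Fin (p+1)) (hI : (SjF j (f I)).Nonempty) :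
    ∃ I' : Fin (p+1), I' ≠ I ∧ (SjF j (f I')).Nonempty ∧
      ((((SjF j (f I)).sup id : ℕ) : ℤ) - (γ j : ℤ)) ≤ ((Jn I' : ℤ) - (γs : ℤ)) := by
  classical
  -- Step 1: a permutation achieving a nonnegative diagonal sum for row I removed
  have hbot0 : (⊥ : WithBot ℕ) < 0 := by exact_mod_cast WithBot.bot_lt_coe 0
  obtain ⟨σ, -, hσ⟩ : ∃ σ : Equiv.Perm (Fin p), σ ∈ Finset.univ ∧
      (0 : WithBot ℕ) ≤ ∑ k, ordJ (σ k) (f (I.succAbove k)) :=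
    (Finset.le_sup_iff hbot0).mp (hsuper I)
  -- Step 2: each entry on that diagonal is finite
  have hne : ∀ k, (SjF (σ k) (f (I.succAbove k))).Nonempty := by
    intro k
    by_contra hk
    rw [Finset.not_nonempty_iff_eq_empty] at hk
    have hbot : ordJ (σ k) (f (I.succAbove k)) = ⊥ := by
      rw [ordJ, hk]; exact Finset.max_empty
    have hsum : ∑ k, ordJ (σ k) (f (I.succAbove k)) = ⊥ := by
      rw [← Finset.sum_erase_add _ _ (Finset.mem_univ k), hbot, WithBot.add_bot]
    rw [hsum] at hσ
    exact absurd hσ (by simp)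
  -- Step 3: the row I' that σ pairs with column j
  set k0 : Fin p := σ.symm j with hk0
  set I' : Fin (p+1) := I.succAbove k0 with hI'def
  have hI'I : I' ≠ I := Fin.succAbove_ne I k0
  have hσk0 : σ k0 = j := σ.apply_symm_apply j
  have hSI' : (SjF j (f I')).Nonempty := by
    have := hne k0; rwa [hσk0] at this
  -- Step 4: the index of row I in the enumeration of rows ≠ I'
  obtain ⟨ks, hks⟩ : ∃ k, I'.succAbove k = I := Fin.exists_succAbove_eq hI'I.symm
  -- Step 5: for every other index, the row is some I.succAbove m with m ≠ k0
  have hm : ∀ k, k ≠ ks → ∃ m, I.succAbove m = I'.succAbove k ∧ m ≠ k0 := by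
    intro k hk
    have h1 : I'.succAbove k ≠ I := by
      intro h
      exact hk (Fin.succAbove_right_injective (h.trans hks.symm))
    obtain ⟨m, hm⟩ := Fin.exists_succAbove_eq h1
    refine ⟨m, hm, ?_⟩
    intro hmk0
    rw [hmk0] at hm
    exact Fin.succAbove_ne I' k hm.symm
  choose m hm1 hm2 using hm
  -- Step 6: the new diagonal
  set τfun : Fin p → Fin p := fun k => if h : k = ks then j else σ (m k h) with hτfun
  have hτks : τfun ks = j := by simp [hτfun]
  have hτinj : Function.Injective τfun := by
    intro a b hab
    by_cases ha : a = ks <;> by_cases hb : b = ks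
    · rw [ha, hb]
    · exfalso
      rw [hτfun] at hab; simp only [ha, dif_pos, dif_neg hb] at hab
      have : m b hb = k0 := by
        apply σ.injective; rw [hσk0, ← hab]
      exact hm2 b hb this
    · exfalso
      rw [hτfun] at hab; simp only [hb, dif_pos, dif_neg ha] at hab
      have : m a ha = k0 := by
        apply σ.injective; rw [hσk0, hab]
      exact hm2 a ha this
    · rw [hτfun] at hab; simp only [dif_neg ha, dif_neg hb] at hab
      have hmab : m a ha = m b hb := σ.injective hab
      have : I'.succAbove a = I'.succAbove b := by
        rw [← hm1 a ha, ← hm1 b hb, hmab]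
      exact Fin.succAbove_right_injective this
  set τ : Equiv.Perm (Fin p) :=
    Equiv.ofBijective τfun (Finite.injective_iff_bijective.mp hτinj) with hτdef
  have hτapp : ∀ k, τ k = τfun k := fun k => rfl
  -- Step 7: each entry of the new diagonal is a nonempty support
  have hne' : ∀ k, (SjF (τfun k) (f (I'.succAbove k))).Nonempty := by
    intro k
    by_cases hk : k = ks
    · subst hk
      rw [hτks, hks]; exact hI
    · have : τfun k = σ (m k hk) := by simp [hτfun, dif_neg hk]
      rw [this, ← hm1 k hk]
      exact hne (m k hk)
  set N : Fin p → ℕ := fun k => (SjF (τfun k) (f (I'.succAbove k))).sup id with hN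
  have hord : ∀ k, ordJ (τfun k) (f (I'.succAbove k)) = ((N k : ℕ) : WithBot ℕ) := by
    intro k
    rw [ordJ, ← (SjF (τfun k) (f (I'.succAbove k))).coe_max' (hne' k),
      Finset.max'_eq_sup', Finset.sup'_eq_sup]
    rfl
  -- Step 8: the Jacobi number of the system with row I' removed bounds the diagonal sum
  have hJge : ((∑ k, N k : ℕ) : WithBot ℕ) ≤ jacobiNumber f I' := by
    rw [jacobiNumber]
    refine le_trans ?_ (Finset.le_sup (Finset.mem_univ τ))
    have : ∑ k, ordJ (τ k) (f (I'.succAbove k)) = ((∑ k, N k : ℕ) : WithBot ℕ) := by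
      push_cast
      refine Finset.sum_congr rfl fun k _ => ?_
      rw [hτapp k, hord k]
    rw [this]
  have hJn' : ∑ k, N k ≤ Jn I' := by
    have := hJn I'
    rw [← this] at hJge
    exact_mod_cast hJge
  -- Step 9: each entry is at least γ of its column
  have hNγ : ∀ k, γ (τfun k) ≤ N k := by
    intro k
    obtain ⟨x, hx⟩ := hne' k
    have hxmem : x ∈ Finset.univ.biUnion fun i => SjF (τfun k) (f i) :=
      Finset.mem_biUnion.mpr ⟨I'.succAbove k, Finset.mem_univ _, hx⟩
    have h1 : γ (τfun k) ≤ x := by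
      rw [hγ (τfun k)]
      exact Finset.min'_le _ x hxmem
    have h2 : x ≤ N k := Finset.le_sup (f := id) hx
    exact h1.trans h2
  -- Step 10: arithmetic
  have hNks : N ks = (SjF j (f I)).sup id := by
    rw [hN]; simp only [hτks, hks]
  have hsum1 : γ j + ∑ k ∈ Finset.univ.erase ks, γ (τfun k) = γs := by
    rw [hγs, ← Equiv.sum_comp τ γ, ← Finset.add_sum_erase _ (fun k => γ (τ k)) (Finset.mem_univ ks)]
    congr 1
    rw [hτapp, hτks]
  have hsum2 : N ks + ∑ k ∈ Finset.univ.erase ks, γ (τfun k) ≤ ∑ k, N k := by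
    rw [← Finset.add_sum_erase _ N (Finset.mem_univ ks)]
    exact add_le_add le_rfl (Finset.sum_le_sum fun k _ => hNγ k)
  refine ⟨I', hI'I, hSI', ?_⟩
  rw [← hNks]
  omega
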